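/- Let A, B, C be points in ℝ² with dist(A,B) = 1, and suppose the angles ∠CAB and ∠CBA are both less than π/2, and dist(A,C) ≥ 1, dist(B,C) ≥ 1. Let D be the orthogonal projection of C onto the line through A and B. Then dist(C,D) ≥ (√3/2)·min(dist(A,C), dist(B,C)). -/

import Mathlib

open EuclideanGeometry

private lemma inner_pos_of_angle_lt (x y : EuclideanSpace ℝ (Fin 2))
    (hx : 1 ≤ ‖x‖) (hy : 0 < ‖y‖)
    (h : InnerProductGeometry.angle x y < Real.pi / 2) :
    (0 : ℝ) < inner ℝ x y := by
  have hcos : 0 < Real.cos (InnerProductGeometry.angle x y) := by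
    apply Real.cos_pos_of_mem_Ioo
    constructor
    · linarith [InnerProductGeometry.angle_nonneg x y, Real.pi_pos]
    · exact h
  have := InnerProductGeometry.cos_angle_mul_norm_mul_norm x y
  rw [← this]
  positivity

private lemma arith_key (a b c p : ℝ) (ha : 1 ≤ a) (hb : 1 ≤ b) (hc : 0 ≤ c)
    (hp0 : 0 < p) (hp1 : p < 1) (hcsq : c ^ 2 = a ^ 2 - p ^ 2)
    (hbsq : b ^ 2 = a ^ 2 - 2 * p + 1) :
    Real.sqrt 3 / 2 * min a b ≤ c := by
  have h3 : Real.sqrt 3 ^ 2 = 3 := Real.sq_sqrt (by norm_num)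
  have hL : 0 ≤ Real.sqrt 3 / 2 * min a b := by
    have : (0:ℝ) ≤ min a b := le_min (by linarith) (by linarith)
    positivity
  have hkey : (Real.sqrt 3 / 2 * min a b) ^ 2 ≤ c ^ 2 := by
    have h34 : (Real.sqrt 3 / 2) ^ 2 = 3 / 4 := by rw [div_pow, h3]; norm_num
    rcases min_cases a b with ⟨hmin, hle⟩ | ⟨hmin, hle⟩
    · rw [hmin, mul_pow, h34, hcsq]
      have ha2 : a ^ 2 ≤ b ^ 2 := by nlinarith
      have hp2 : p ≤ 1 / 2 := by nlinarith
      nlinarith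
    · rw [hmin, mul_pow, h34, hcsq]
      have ha2 : b ^ 2 ≤ a ^ 2 := by nlinarith
      have hp2 : 1 / 2 ≤ p := by nlinarith
      nlinarith
  have := Real.sqrt_le_sqrt hkey
  rwa [Real.sqrt_sq hL, Real.sqrt_sq hc] at this

theorem altitude_ge (A B C D : EuclideanSpace ℝ (Fin 2))
    (hAB : dist A B = 1) (hAC : 1 ≤ dist A C) (hBC : 1 ≤ dist B C)
    (hA : EuclideanGeometry.angle C A B < Real.pi / 2)
    (hB : EuclideanGeometry.angle C B A < Real.pi / 2)
    (hD : D ∈ affineSpan ℝ ({A, B} : Set (EuclideanSpace ℝ (Fin 2))))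
    (hperp : inner ℝ (C - D) (B - A) = (0 : ℝ)) :
    Real.sqrt 3 / 2 * min (dist A C) (dist B C) ≤ dist C D := by
  set u : EuclideanSpace ℝ (Fin 2) := B - A with hu
  set v : EuclideanSpace ℝ (Fin 2) := C - A with hv
  have hnu : ‖u‖ = 1 := by rw [hu, ← dist_eq_norm, dist_comm]; exact hAB
  have hnv : 1 ≤ ‖v‖ := by rw [hv, ← dist_eq_norm, dist_comm]; exact hAC
  have hnvu : 1 ≤ ‖v - u‖ := by
    have : v - u = C - B := by rw [hv, hu]; abel
    rw [this, ← dist_eq_norm, dist_comm]; exact hBC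
  have hD' : (D -ᵥ A) +ᵥ A ∈ affineSpan ℝ ({A, B} : Set (EuclideanSpace ℝ (Fin 2))) := by
    rwa [vsub_vadd]
  obtain ⟨t, hDt⟩ := vadd_left_mem_affineSpan_pair.mp hD'
  have hDeq : D = t • u + A := by
    have : t • (B - A) = D - A := hDt
    rw [hu, this]; abel
  have hCD : C - D = v - t • u := by rw [hDeq, hv]; abel
  have huu : (inner ℝ u u : ℝ) = 1 := by
    rw [real_inner_self_eq_norm_sq, hnu]; norm_num
  set p : ℝ := inner ℝ v u with hp
  have ht : t = p := by
    rw [hCD, inner_sub_left, real_inner_smul_left, huu] at hperp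
    simp only [hp]; linarith
  -- inner is positive at A
  have hposA : 0 < p := by
    rw [hp]
    refine inner_pos_of_angle_lt v u hnv (by rw [hnu]; norm_num) ?_
    have : EuclideanGeometry.angle C A B = InnerProductGeometry.angle v u := by
      rw [EuclideanGeometry.angle, hv, hu]; rfl
    rw [← this]; exact hA
  have hposB : p < 1 := by
    have h2 : (0 : ℝ) < inner ℝ (v - u) (-u) := by
      refine inner_pos_of_angle_lt (v - u) (-u) hnvu (by rw [norm_neg, hnu]; norm_num) ?_
      have : EuclideanGeometry.angle C B A = InnerProductGeometry.angle (v - u) (-u) := by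
        rw [EuclideanGeometry.angle]
        congr 1
        · rw [vsub_eq_sub, hv, hu]; abel
        · rw [vsub_eq_sub, hu]; abel
      rw [← this]; exact hB
    rw [inner_neg_right, inner_sub_left, huu] at h2
    simp only [← hp] at h2; linarith
  -- norms squared
  have hvu : (inner ℝ u v : ℝ) = p := by rw [real_inner_comm]
  have hCDsq : ‖C - D‖ ^ 2 = ‖v‖ ^ 2 - p ^ 2 := by
    rw [hCD, ht]
    rw [← real_inner_self_eq_norm_sq, ← real_inner_self_eq_norm_sq]
    rw [inner_sub_sub_self, real_inner_smul_left, real_inner_smul_right,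
      real_inner_smul_left, real_inner_smul_right, huu, hvu, ← hp]
    ring
  have hBCsq : ‖v - u‖ ^ 2 = ‖v‖ ^ 2 - 2 * p + 1 := by
    rw [← real_inner_self_eq_norm_sq, ← real_inner_self_eq_norm_sq,
      inner_sub_sub_self, huu, hvu, ← hp]
    ring
  have hdist : dist C D = ‖C - D‖ := dist_eq_norm C D
  have hdAC : dist A C = ‖v‖ := by rw [hv, dist_comm, dist_eq_norm]
  have hdBC : dist B C = ‖v - u‖ := by
    have : v - u = C - B := by rw [hv, hu]; abel
    rw [this, dist_comm, dist_eq_norm]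
  rw [hdist, hdAC, hdBC]
  exact arith_key ‖v‖ ‖v - u‖ ‖C - D‖ p hnv hnvu (norm_nonneg _) hposA hposB hCDsq hBCsq
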